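/- Let H be a real inner product space and T : H → H a continuous linear operator that is self-adjoint (⟨Tu, v⟩ = ⟨u, Tv⟩ for all u, v ∈ H), positive semi-definite (⟨Tu, u⟩ ≥ 0 for all u ∈ H), and contractive (‖Tv‖ ≤ ‖v‖ for all v ∈ H). Then T is ball-positive: ⟨Tu, u⟩ ≥ ‖Tu‖² for all u ∈ H. -/
import Mathlib


open RealInnerProductSpace

/-- a self-adjoint, positive semi-definite, contractive operator on a real
inner product space is ball-positive. -/
theorem ballPositive_of_symmetric_psd_contractive
    {H : Type*} [NormedAddCommGroup H] [InnerProductSpace ℝ H]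
    (T : H →L[ℝ] H)
    (hsa : ∀ u v : H, ⟪T u, v⟫ = ⟪u, T v⟫)
    (hpsd : ∀ u : H, 0 ≤ ⟪T u, u⟫)
    (hcontr : ∀ v : H, ‖T v‖ ≤ ‖v‖) :
    ∀ u : H, ‖T u‖ ^ 2 ≤ ⟪T u, u⟫ := by
  intro u
  have h1 : (0:ℝ) ≤ ⟪T (u - T u), u - T u⟫ := hpsd _
  have hexp : ⟪T (u - T u), u - T u⟫
      = ⟪T u, u⟫ - 2 * ⟪T u, T u⟫ + ⟪T (T u), T u⟫ := by
    rw [map_sub, inner_sub_left, inner_sub_right, inner_sub_right]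
    have h2 : ⟪T (T u), u⟫ = ⟪T u, T u⟫ := hsa (T u) u
    rw [h2]
    ring
  have hcs : ⟪T (T u), T u⟫ ≤ ‖T u‖ ^ 2 := by
    calc ⟪T (T u), T u⟫ ≤ ‖T (T u)‖ * ‖T u‖ := real_inner_le_norm _ _
      _ ≤ ‖T u‖ * ‖T u‖ := by
          exact mul_le_mul_of_nonneg_right (hcontr (T u)) (norm_nonneg _)
      _ = ‖T u‖ ^ 2 := by ring
  have hself : ⟪T u, T u⟫ = ‖T u‖ ^ 2 := real_inner_self_eq_norm_sq _
  nlinarith [h1, hexp, hcs, hself]
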